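/- Let I ⊆ J be two ideals of ℂ[x₁,...,x_n] each generated by powers of linear forms, with I generated by {ℓ_α^{d_α+1}} and J generated by the subfamily {ℓ_β^{d_β+1}} for β in a subset S, all d_α ≥ 1. If the (d_α+1)-st powers generate the same ideal (I = J at level +1), then the ideals generated by the d_α-th powers also coincide: ⟨ℓ_α^{d_α} : all α⟩ = ⟨ℓ_β^{d_β} : β ∈ S⟩. -/
import Mathlib


open MvPolynomial

/-- The linear form in ℂ[x₁,...,xₙ] with coefficient vector `v`. -/
noncomputable def linForm {n : ℕ} (v : Fin n → ℂ) : MvPolynomial (Fin n) ℂ :=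
  ∑ i, C (v i) * X i

lemma pderiv_linForm {n : ℕ} (v : Fin n → ℂ) (j : Fin n) :
    pderiv j (linForm v) = C (v j) := by
  simp [linForm, Pi.single_apply, Finset.sum_ite_eq', eq_comm]

/-- given a family of nonzero linear forms ℓ_α with exponents d_α ≥ 1 and a
subfamily indexed by S, if the ideals generated by the (d_α+1)-st powers coincide,
then so do the ideals generated by the d_α-th powers. -/
theorem stmt_5 {n : ℕ} {ι : Type*} (ℓ : ι → (Fin n → ℂ)) (d : ι → ℕ) (S : Set ι)
    (hne : ∀ α, ℓ α ≠ 0) (hd : ∀ α, 1 ≤ d α)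
    (h : Ideal.span (Set.range fun α => linForm (ℓ α) ^ (d α + 1))
        = Ideal.span ((fun β => linForm (ℓ β) ^ (d β + 1)) '' S)) :
    Ideal.span (Set.range fun α => linForm (ℓ α) ^ (d α))
      = Ideal.span ((fun β => linForm (ℓ β) ^ (d β)) '' S) := by
  set J' : Ideal (MvPolynomial (Fin n) ℂ) :=
    Ideal.span ((fun β => linForm (ℓ β) ^ (d β)) '' S) with hJ'
  apply le_antisymm
  · rw [Ideal.span_le]
    rintro _ ⟨α, rfl⟩
    obtain ⟨j, hj⟩ : ∃ j, ℓ α j ≠ 0 := by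
      by_contra hc
      push_neg at hc
      exact hne α (funext hc)
    have key : ∀ f ∈ Ideal.span ((fun β => linForm (ℓ β) ^ (d β + 1)) '' S),
        f ∈ J' ∧ pderiv j f ∈ J' := by
      intro f hf
      refine Submodule.span_induction ?_ ?_ ?_ ?_ hf
      · rintro _ ⟨β, hβ, rfl⟩
        show _ ∧ pderiv j (linForm (ℓ β) ^ (d β + 1)) ∈ J'
        have hgen : linForm (ℓ β) ^ (d β) ∈ J' :=
          Ideal.subset_span ⟨β, hβ, rfl⟩
        constructor
        · show linForm (ℓ β) ^ (d β + 1) ∈ J'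
          have : linForm (ℓ β) ^ (d β + 1) = linForm (ℓ β) * linForm (ℓ β) ^ (d β) := by
            ring
          rw [this]
          exact Ideal.mul_mem_left _ _ hgen
        · rw [Derivation.leibniz_pow]
          simp only [Nat.add_sub_cancel, smul_eq_mul, nsmul_eq_mul]
          exact Ideal.mul_mem_left _ _ (Ideal.mul_mem_right _ _ hgen)
      · simp
      · intro x y _ _ hx hy
        exact ⟨J'.add_mem hx.1 hy.1, by rw [map_add]; exact J'.add_mem hx.2 hy.2⟩
      · intro r x _ hx
        refine ⟨J'.smul_mem r hx.1, ?_⟩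
        rw [smul_eq_mul, Derivation.leibniz]
        exact J'.add_mem (J'.smul_mem _ hx.2) (Ideal.mul_mem_right _ _ hx.1)
    have hmem : linForm (ℓ α) ^ (d α + 1)
        ∈ Ideal.span ((fun β => linForm (ℓ β) ^ (d β + 1)) '' S) := by
      rw [← h]
      exact Ideal.subset_span ⟨α, rfl⟩
    obtain ⟨-, hD⟩ := key _ hmem
    have hcalc : pderiv j (linForm (ℓ α) ^ (d α + 1))
        = C (((d α : ℂ) + 1) * ℓ α j) * linForm (ℓ α) ^ (d α) := by
      rw [Derivation.leibniz_pow, pderiv_linForm]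
      simp only [Nat.add_sub_cancel, smul_eq_mul, nsmul_eq_mul]
      rw [← map_natCast (C : ℂ →+* MvPolynomial (Fin n) ℂ) (d α + 1), C_mul]
      push_cast
      ring
    have hunit : (((d α : ℂ) + 1) * ℓ α j) ≠ 0 := by
      exact mul_ne_zero (Nat.cast_add_one_ne_zero _) hj
    have : linForm (ℓ α) ^ (d α)
        = C ((((d α : ℂ) + 1) * ℓ α j)⁻¹) * pderiv j (linForm (ℓ α) ^ (d α + 1)) := by
      rw [hcalc, ← mul_assoc, ← C_mul, inv_mul_cancel₀ hunit, C_1, one_mul]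
    show linForm (ℓ α) ^ (d α) ∈ J'
    rw [this]
    exact Ideal.mul_mem_left _ _ hD
  · exact Ideal.span_mono (Set.image_subset_range _ _)
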